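/- arXiv:1808.08479 — 5 statements merged into one kernel-verified Lean document; each statement's English description precedes it below -/
import Mathlib

section
/- Let n ≥ 1 and let c_1,…,c_n be real numbers with ∑_{i=1}^n c_i = 0 such that ∑_{i∈I} c_i ≠ 0 for every nonempty proper subset I ⊆ {1,…,n}. Then ∑_{σ ∈ S_n} ∏_{k=1}^{n−1} sgn(c_{σ(1)} + ⋯ + c_{σ(k)}) equals (n−1)! if n is odd, and equals 0 if n is even. Equivalently, with F^{(0)}_n(c_1,…,c_n) = 2^{1−n} ∏_{k=1}^{n−1} sgn(c_1+⋯+c_k), the symmetrization (1/n!)∑_{σ∈S_n} F^{(0)}_n(c_{σ(1)},…,c_{σ(n)}) equals 2^{1−n}/n for n odd and 0 for n even, irrespective of the values of the c_i. -/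
open scoped Classical

open Finset

open Fin.NatCast


-- rank lemma
lemma rankLemma (n : ℕ) (f : Fin n → ℝ) (hf : Function.Injective f) :
    ∑ t : Fin n, ∏ u ∈ Finset.univ.erase t, Real.sign (f u - f t)
      = if Odd n then 1 else 0 := by
  have hprod : ∀ t : Fin n, ∏ u ∈ Finset.univ.erase t, Real.sign (f u - f t)
      = (-1 : ℝ) ^ (Finset.univ.filter (fun u => f u < f t)).card := by
    intro t
    have h1 : ∀ u ∈ Finset.univ.erase t, Real.sign (f u - f t)
        = if f u < f t then (-1 : ℝ) else 1 := by
      intro u hu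
      have hne : f u ≠ f t := fun h => (Finset.mem_erase.mp hu).1 (hf h)
      rcases lt_or_gt_of_ne hne with h | h
      · rw [Real.sign_of_neg (by linarith), if_pos h]
      · rw [Real.sign_of_pos (by linarith), if_neg (by linarith)]
    rw [Finset.prod_congr rfl h1, Finset.prod_ite, Finset.prod_const, Finset.prod_const,
      one_pow, mul_one]
    congr 1
    rw [Finset.filter_erase, Finset.erase_eq_of_notMem (by simp)]
  have hcard : ∀ t : Fin n, (Finset.univ.filter (fun u => f u < f t)).card < n := by
    intro t
    have : Finset.univ.filter (fun u => f u < f t) ⊂ Finset.univ := by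
      refine Finset.ssubset_iff_of_subset (Finset.subset_univ _) |>.mpr ⟨t, Finset.mem_univ t, by simp⟩
    simpa using Finset.card_lt_card this
  set r : Fin n → Fin n := fun t => ⟨_, hcard t⟩ with hr
  have hinj : Function.Injective r := by
    intro a b hab
    by_contra hne
    have hfa : f a ≠ f b := fun h => hne (hf h)
    have key : ∀ x y : Fin n, f x < f y →
        (Finset.univ.filter (fun u => f u < f x)).card <
        (Finset.univ.filter (fun u => f u < f y)).card := by
      intro x y hxy
      apply Finset.card_lt_card
      rw [Finset.ssubset_def]
      constructor
      · intro u hu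
        simp only [Finset.mem_filter, Finset.mem_univ, true_and] at hu ⊢
        linarith
      · intro hcon
        have hx := hcon (by simp [hxy] : x ∈ Finset.univ.filter (fun u => f u < f y))
        simp only [Finset.mem_filter, Finset.mem_univ, true_and] at hx
        linarith
    have h1 := congrArg Fin.val hab
    simp only [hr] at h1
    rcases lt_or_gt_of_ne hfa with h | h
    · exact absurd h1 (Nat.ne_of_lt (key a b h))
    · exact absurd h1 (Nat.ne_of_gt (key b a h))
  have hbij : Function.Bijective r := (Finite.injective_iff_bijective).mp hinj
  calc ∑ t : Fin n, ∏ u ∈ Finset.univ.erase t, Real.sign (f u - f t)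
      = ∑ t : Fin n, (-1 : ℝ) ^ ((r t : Fin n) : ℕ) := by
        exact Finset.sum_congr rfl fun t _ => hprod t
    _ = ∑ u : Fin n, (-1 : ℝ) ^ (u : ℕ) := Fintype.sum_bijective r hbij _ _ (fun t => rfl)
    _ = ∑ i ∈ Finset.range n, (-1 : ℝ) ^ i := Fin.sum_univ_eq_sum_range _ n
    _ = if Odd n then 1 else 0 := by
        rw [neg_one_geom_sum]
        by_cases h : Even n
        · simp [h, Nat.not_odd_iff_even.mpr h]
        · simp [h, Nat.not_even_iff_odd.mp h]

section
variable {n : ℕ} [NeZero n]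

lemma sumFilterLt (g : Fin n → ℝ) (m : ℕ) (hm : m ≤ n) :
    ∑ j ∈ Finset.univ.filter (fun j : Fin n => (j : ℕ) < m), g j
      = ∑ i ∈ Finset.range m, g (i : Fin n) := by
  refine Finset.sum_nbij' (fun j => (j : ℕ)) (fun i => ((i : ℕ) : Fin n)) ?_ ?_ ?_ ?_ ?_
  · intro j hj
    simp only [Finset.mem_filter] at hj
    exact Finset.mem_range.mpr hj.2
  · intro i hi
    simp only [Finset.mem_range] at hi
    simp [Fin.val_cast_of_lt (lt_of_lt_of_le hi hm), hi]
  · intro j hj; exact Fin.cast_val_eq_self j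
  · intro i hi
    simp only [Finset.mem_range] at hi
    exact Fin.val_cast_of_lt (lt_of_lt_of_le hi hm)
  · intro j hj; rw [Fin.cast_val_eq_self j]

lemma valAddOne (a : Fin n) :
    ((a + 1 : Fin n) : ℕ) = if (a : ℕ) + 1 = n then 0 else (a : ℕ) + 1 := by
  have hlt := a.isLt
  have h2 : ((a : ℕ) + 1 % n) % n = ((a : ℕ) + 1) % n := by
    rw [Nat.add_mod (a : ℕ) 1 n, Nat.mod_eq_of_lt hlt]
  rw [Fin.add_def, Fin.val_one']
  show ((a : ℕ) + 1 % n) % n = _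
  rw [h2]
  split
  · next h => rw [h, Nat.mod_self]
  · next h => exact Nat.mod_eq_of_lt (by omega)

end

lemma keyShift (n : ℕ) (hn : 1 ≤ n) (c : Fin n → ℝ)
    (hsum : ∑ i, c i = 0)
    (hgen : ∀ I : Finset (Fin n), I.Nonempty → I ≠ Finset.univ → ∑ i ∈ I, c i ≠ 0)
    (σ : Equiv.Perm (Fin n)) :
    ∑ t : Fin n, ∏ k ∈ Finset.range (n - 1),
        Real.sign (∑ j ∈ Finset.univ.filter (fun j : Fin n => (j : ℕ) ≤ k), c (σ (j + t)))
      = if Odd n then 1 else 0 := by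
  have hNZ : NeZero n := ⟨by omega⟩
  set f : Fin n → ℝ := fun a => ∑ i ∈ Finset.range (a : ℕ), c (σ ((i : ℕ) : Fin n)) with hf
  have hz : ∑ i ∈ Finset.range n, c (σ ((i : ℕ) : Fin n)) = 0 := by
    rw [← sumFilterLt (fun j => c (σ j)) n le_rfl,
      Finset.filter_true_of_mem (fun j _ => j.isLt)]
    rw [show (∑ j : Fin n, c (σ j)) = ∑ j : Fin n, c j from Equiv.sum_comp σ c]
    exact hsum
  have L0 : ∀ a : Fin n, f (a + 1) = f a + c (σ a) := by
    intro a
    rcases eq_or_ne ((a : ℕ) + 1) n with h | h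
    · have hval : ((a + 1 : Fin n) : ℕ) = 0 := by rw [valAddOne, if_pos h]
      have h1 : f (a + 1) = 0 := by simp only [hf]; rw [hval]; simp
      have h2 : ∑ i ∈ Finset.range n, c (σ ((i : ℕ) : Fin n)) = f a + c (σ a) := by
        rw [show Finset.range n = Finset.range ((a : ℕ) + 1) from by rw [h],
          Finset.sum_range_succ, Fin.cast_val_eq_self a]
      rw [h1, ← h2, hz]
    · have hval : ((a + 1 : Fin n) : ℕ) = (a : ℕ) + 1 := by rw [valAddOne, if_neg h]
      simp only [hf]
      rw [hval, Finset.sum_range_succ, Fin.cast_val_eq_self a]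
  have L1 : ∀ (t : Fin n) (m : ℕ),
      f (t + (m : Fin n)) = f t + ∑ i ∈ Finset.range m, c (σ (t + (i : Fin n))) := by
    intro t m
    induction m with
    | zero => simp
    | succ m ih =>
      have hc : ((m + 1 : ℕ) : Fin n) = ((m : ℕ) : Fin n) + 1 := by push_cast; ring
      rw [hc, ← add_assoc, L0 (t + (m : Fin n)), ih, Finset.sum_range_succ]
      ring
  have hprod : ∀ t : Fin n, ∏ k ∈ Finset.range (n - 1),
      Real.sign (∑ j ∈ Finset.univ.filter (fun j : Fin n => (j : ℕ) ≤ k), c (σ (j + t)))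
      = ∏ u ∈ Finset.univ.erase t, Real.sign (f u - f t) := by
    intro t
    have hterm : ∀ k ∈ Finset.range (n - 1),
        Real.sign (∑ j ∈ Finset.univ.filter (fun j : Fin n => (j : ℕ) ≤ k), c (σ (j + t)))
        = Real.sign (f (t + ((k + 1 : ℕ) : Fin n)) - f t) := by
      intro k hk
      have hk' : k + 1 ≤ n := by have := Finset.mem_range.mp hk; omega
      congr 1
      have e1 : Finset.univ.filter (fun j : Fin n => (j : ℕ) ≤ k)
          = Finset.univ.filter (fun j : Fin n => (j : ℕ) < k + 1) := by
        apply Finset.filter_congr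
        intro j _
        simp [Nat.lt_succ_iff]
      rw [e1, sumFilterLt (fun j => c (σ (j + t))) (k + 1) hk', L1 t (k + 1)]
      simp [add_comm]
    rw [Finset.prod_congr rfl hterm]
    refine Finset.prod_nbij' (fun k => t + ((k + 1 : ℕ) : Fin n))
      (fun u => ((u - t : Fin n) : ℕ) - 1) ?_ ?_ ?_ ?_ ?_
    · intro k hk
      have hk' : k + 1 < n := by have := Finset.mem_range.mp hk; omega
      refine Finset.mem_erase.mpr ⟨?_, Finset.mem_univ _⟩
      intro hcon
      have h0 : ((k + 1 : ℕ) : Fin n) = 0 := by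
        have := add_eq_left.mp hcon
        exact this
      have := congrArg Fin.val h0
      rw [Fin.val_cast_of_lt hk'] at this
      simp at this
    · intro u hu
      have hne : u - t ≠ 0 := sub_ne_zero.mpr (Finset.mem_erase.mp hu).1
      have h1 : (u - t : Fin n).val ≠ 0 := fun hcon => hne (Fin.ext (by simp [hcon]))
      have h2 := (u - t).isLt
      show (u - t : Fin n).val - 1 ∈ Finset.range (n - 1)
      exact Finset.mem_range.mpr (by omega)
    · intro k hk
      have hk' : k + 1 < n := by have := Finset.mem_range.mp hk; omega
      show ((t + ((k + 1 : ℕ) : Fin n)) - t : Fin n).val - 1 = k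
      rw [add_sub_cancel_left, Fin.val_cast_of_lt hk']
      omega
    · intro u hu
      have hne : u - t ≠ 0 := sub_ne_zero.mpr (Finset.mem_erase.mp hu).1
      have h1 : (u - t : Fin n).val ≠ 0 := fun hcon => hne (Fin.ext (by simp [hcon]))
      show t + ((((u - t : Fin n).val - 1) + 1 : ℕ) : Fin n) = u
      have h3 : (u - t : Fin n).val - 1 + 1 = (u - t : Fin n).val := by omega
      rw [h3, Fin.cast_val_eq_self, add_comm, sub_add_cancel]
    · intro k hk; rfl
  have hfi : Function.Injective f := by
    have hmono : ∀ a b : Fin n, (a : ℕ) < (b : ℕ) → f a ≠ f b := by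
      intro a b hab hcon
      have hsub : f b - f a = ∑ i ∈ Finset.Ico (a : ℕ) (b : ℕ), c (σ ((i : ℕ) : Fin n)) := by
        simp only [hf]
        rw [Finset.sum_Ico_eq_sub _ (le_of_lt hab)]
      set J : Finset (Fin n) := (Finset.Ico (a : ℕ) (b : ℕ)).image
        (fun i => σ ((i : ℕ) : Fin n)) with hJ
      have hinj : Set.InjOn (fun i : ℕ => σ ((i : ℕ) : Fin n)) (Finset.Ico (a : ℕ) (b : ℕ)) := by
        intro x hx y hy hxy
        simp only [Finset.coe_Ico, Set.mem_Ico] at hx hy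
        have hx' : x < n := lt_of_lt_of_le hx.2 (le_of_lt b.isLt)
        have hy' : y < n := lt_of_lt_of_le hy.2 (le_of_lt b.isLt)
        have := σ.injective hxy
        have := congrArg Fin.val this
        rwa [Fin.val_cast_of_lt hx', Fin.val_cast_of_lt hy'] at this
      have hJsum : ∑ x ∈ J, c x = ∑ i ∈ Finset.Ico (a : ℕ) (b : ℕ), c (σ ((i : ℕ) : Fin n)) :=
        Finset.sum_image fun x hx y hy => hinj hx hy
      have hJne : J.Nonempty := by
        refine Finset.image_nonempty.mpr ?_
        exact Finset.nonempty_Ico.mpr hab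
      have hJproper : J ≠ Finset.univ := by
        intro hcon2
        have hcard : J.card ≤ (Finset.Ico (a : ℕ) (b : ℕ)).card := Finset.card_image_le
        rw [hcon2, Finset.card_univ, Fintype.card_fin, Nat.card_Ico] at hcard
        have := b.isLt
        omega
      have := hgen J hJne hJproper
      rw [hJsum, ← hsub] at this
      exact this (by rw [hcon]; ring)
    intro a b hab
    by_contra hne
    rcases Nat.lt_or_ge (a : ℕ) (b : ℕ) with h | h
    · exact hmono a b h hab
    · have h' : (b : ℕ) < (a : ℕ) := by
        rcases Nat.lt_or_ge (b : ℕ) (a : ℕ) with h2 | h2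
        · exact h2
        · exact absurd (Fin.ext (le_antisymm h2 h)) hne
      exact hmono b a h' hab.symm
  calc ∑ t : Fin n, ∏ k ∈ Finset.range (n - 1),
        Real.sign (∑ j ∈ Finset.univ.filter (fun j : Fin n => (j : ℕ) ≤ k), c (σ (j + t)))
      = ∑ t : Fin n, ∏ u ∈ Finset.univ.erase t, Real.sign (f u - f t) :=
        Finset.sum_congr rfl fun t _ => hprod t
    _ = if Odd n then 1 else 0 := rankLemma n f hfi

/-- for `c₁,…,c_n` summing to zero, with no proper nonempty subset summing
to zero, the sum over permutations of the product of signs of partial sums equals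
`(n−1)!` for odd `n` and `0` for even `n`; equivalently the symmetrization of
`F⁰_n = 2^{1−n} ∏ sgn(S_k)` equals `2^{1−n}/n` for odd `n` and `0` for even `n`. -/
theorem sym_sign_partial_sums (n : ℕ) (hn : 1 ≤ n) (c : Fin n → ℝ)
    (hsum : ∑ i, c i = 0)
    (hgen : ∀ I : Finset (Fin n), I.Nonempty → I ≠ Finset.univ → ∑ i ∈ I, c i ≠ 0) :
    (∑ σ : Equiv.Perm (Fin n), ∏ k ∈ Finset.range (n - 1),
        Real.sign (∑ j ∈ Finset.univ.filter (fun j : Fin n => (j : ℕ) ≤ k), c (σ j))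
      = if Odd n then ((n - 1).factorial : ℝ) else 0) ∧
    ((n.factorial : ℝ)⁻¹ * ∑ σ : Equiv.Perm (Fin n), ((2 : ℝ) ^ (n - 1))⁻¹ *
        ∏ k ∈ Finset.range (n - 1),
          Real.sign (∑ j ∈ Finset.univ.filter (fun j : Fin n => (j : ℕ) ≤ k), c (σ j))
      = if Odd n then ((2 : ℝ) ^ (n - 1))⁻¹ / n else 0) := by
  have hNZ : NeZero n := ⟨by omega⟩
  set P : Equiv.Perm (Fin n) → ℝ := fun σ => ∏ k ∈ Finset.range (n - 1),
      Real.sign (∑ j ∈ Finset.univ.filter (fun j : Fin n => (j : ℕ) ≤ k), c (σ j)) with hP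
  have key : ∀ σ : Equiv.Perm (Fin n),
      ∑ t : Fin n, P (σ * Equiv.addRight t) = if Odd n then 1 else 0 := by
    intro σ
    rw [← keyShift n hn c hsum hgen σ]
    refine Finset.sum_congr rfl fun t _ => ?_
    simp only [hP]
    refine Finset.prod_congr rfl fun k _ => ?_
    congr 1
  have h1 : ∀ t : Fin n, ∑ σ : Equiv.Perm (Fin n), P (σ * Equiv.addRight t)
      = ∑ σ : Equiv.Perm (Fin n), P σ := fun t =>
    Equiv.sum_comp (Equiv.mulRight (Equiv.addRight t)) P
  have h2 : (n : ℝ) * (∑ σ : Equiv.Perm (Fin n), P σ)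
      = (n.factorial : ℝ) * (if Odd n then 1 else 0) := by
    calc (n : ℝ) * (∑ σ : Equiv.Perm (Fin n), P σ)
        = ∑ _t : Fin n, ∑ σ : Equiv.Perm (Fin n), P σ := by
          rw [Finset.sum_const, Finset.card_univ, Fintype.card_fin, nsmul_eq_mul]
      _ = ∑ t : Fin n, ∑ σ : Equiv.Perm (Fin n), P (σ * Equiv.addRight t) :=
          Finset.sum_congr rfl fun t _ => (h1 t).symm
      _ = ∑ σ : Equiv.Perm (Fin n), ∑ t : Fin n, P (σ * Equiv.addRight t) :=
          Finset.sum_comm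
      _ = ∑ _σ : Equiv.Perm (Fin n), (if Odd n then (1 : ℝ) else 0) :=
          Finset.sum_congr rfl fun σ _ => key σ
      _ = (n.factorial : ℝ) * (if Odd n then 1 else 0) := by
          rw [Finset.sum_const, Finset.card_univ, Fintype.card_perm, Fintype.card_fin,
            nsmul_eq_mul]
  have hn0 : (n : ℝ) ≠ 0 := Nat.cast_ne_zero.mpr (by omega)
  have hfac : (n.factorial : ℝ) = n * ((n - 1).factorial : ℝ) := by
    rw [← Nat.cast_mul, Nat.mul_factorial_pred (by omega)]
  have hS : ∑ σ : Equiv.Perm (Fin n), P σ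
      = if Odd n then ((n - 1).factorial : ℝ) else 0 := by
    by_cases h : Odd n
    · rw [if_pos h] at h2 ⊢
      rw [mul_one, hfac] at h2
      exact mul_left_cancel₀ hn0 h2
    · rw [if_neg h] at h2 ⊢
      rw [mul_zero] at h2
      exact (mul_eq_zero.mp h2).resolve_left hn0
  refine ⟨hS, ?_⟩
  rw [← Finset.mul_sum, hS]
  by_cases h : Odd n
  · rw [if_pos h, if_pos h, hfac]
    have hf1 : ((n - 1).factorial : ℝ) ≠ 0 := Nat.cast_ne_zero.mpr (Nat.factorial_ne_zero _)
    have h2pow : ((2 : ℝ) ^ (n - 1)) ≠ 0 := by positivity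
    field_simp
  · rw [if_neg h, if_neg h, mul_zero, mul_zero]
end

section
/- With the notation of the context, assume S_ℓ ≠ 0 and Γ_{nℓ} ≠ 0 for all 1 ≤ ℓ ≤ n−1, and S_j·Γ_{nℓ} − S_ℓ·Γ_{nj} ≠ 0 for all 1 ≤ j ≠ ℓ ≤ n−1. Then for an arbitrary sequence of real coefficients (b_k)_{k≥1}, the functions F_m satisfy the recursion: (1/2) ∑_{ℓ=1}^{n−1} (sgn(S_ℓ) − sgn(Γ_{nℓ})) · F_ℓ(c_1^{(ℓ)},…,c_ℓ^{(ℓ)}) · F_{n−ℓ}(c_{ℓ+1}^{(ℓ)},…,c_n^{(ℓ)}) = F_n(c_1,…,c_n) − F_n(β_{n1},…,β_{nn}). -/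
/-- `Fcomp b (x₁,…,x_m) = 2^{1−m} ∑_{m₁+⋯+m_r = m} ∏ₖ b_{m_k} ∏_{k=1}^{r−1} sgn(x₁+⋯+x_{j_k})`,
the sum running over ordered compositions of `m` (encoded as lists of positive naturals
summing to `m`), where `j_k = m₁ + ⋯ + m_k`. -/
noncomputable def Fcomp (b : ℕ → ℝ) (x : List ℝ) : ℝ :=
  ((2 : ℝ) ^ (x.length - 1))⁻¹ *
    ∑ᶠ L ∈ {L : List ℕ | L.sum = x.length ∧ ∀ q ∈ L, 0 < q},
      (L.map b).prod *
        ∏ k ∈ Finset.range (L.length - 1),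
          Real.sign ((x.take ((L.take (k + 1)).sum)).sum)

open Finset


lemma sign_mul' (x y : ℝ) : Real.sign (x * y) = Real.sign x * Real.sign y := by
  rcases lt_trichotomy x 0 with hx | hx | hx <;>
  rcases lt_trichotomy y 0 with hy | hy | hy <;>
  simp [hx, hy, Real.sign_of_neg, Real.sign_of_pos, mul_pos, mul_pos_of_neg_of_neg,
    mul_neg_of_pos_of_neg, mul_neg_of_neg_of_pos]

lemma core_r (D : Finset ℕ) (r : ℕ → ℝ) (h0 : ∀ j ∈ D, r j ≠ 0)
    (hinj : ∀ j ∈ D, ∀ l ∈ D, j ≠ l → r j ≠ r l) :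
    ∑ ℓ ∈ D, (Real.sign (r ℓ) - 1) * ∏ j ∈ D.erase ℓ, Real.sign (r j - r ℓ)
      = ∏ j ∈ D, Real.sign (r j) - 1 := by
  induction D using Finset.strongInduction with
  | _ D ih =>
    rcases D.eq_empty_or_nonempty with rfl | hne
    · simp
    · obtain ⟨m, hm, hmax⟩ := D.exists_max_image r hne
      set D' := D.erase m with hD'
      have hDm : D = insert m D' := by simp [hD', Finset.insert_erase hm]
      have hmD' : m ∉ D' := Finset.notMem_erase _ _
      have hss : D' ⊂ D := Finset.erase_ssubset hm
      have hlt : ∀ j ∈ D', r j < r m := by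
        intro j hj
        have h1 : r j ≤ r m := hmax j (Finset.mem_of_mem_erase hj)
        have h2 : r j ≠ r m := hinj j (Finset.mem_of_mem_erase hj) m hm
          (Finset.ne_of_mem_erase hj)
        exact lt_of_le_of_ne h1 h2
      have key : ∀ ℓ ∈ D', (Real.sign (r ℓ) - 1) * ∏ j ∈ D.erase ℓ, Real.sign (r j - r ℓ)
          = (Real.sign (r ℓ) - 1) * (∏ j ∈ D'.erase ℓ, Real.sign (r j - r ℓ)) := by
        intro ℓ hℓ
        have hℓD : ℓ ∈ D := Finset.mem_of_mem_erase hℓ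
        have hmem : m ∈ D.erase ℓ :=
          Finset.mem_erase.2 ⟨(Finset.ne_of_mem_erase hℓ).symm, hm⟩
        have : D.erase ℓ = insert m ((D.erase ℓ).erase m) := by
          simp [Finset.insert_erase hmem]
        rw [this, Finset.prod_insert (Finset.notMem_erase _ _)]
        rw [Real.sign_of_pos (by linarith [hlt ℓ hℓ] : (0:ℝ) < r m - r ℓ)]
        rw [Finset.erase_right_comm]
        ring
    -- sum over D = term at m + sum over D'
      rw [← Finset.add_sum_erase D _ hm, ← hD', Finset.sum_congr rfl key]
      rw [ih D' hss (fun j hj => h0 j (Finset.mem_of_mem_erase hj))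
        (fun j hj l hl => hinj j (Finset.mem_of_mem_erase hj) l (Finset.mem_of_mem_erase hl))]
      rw [← Finset.mul_prod_erase D _ hm, ← hD']
      rcases Real.sign_apply_eq_of_ne_zero (r m) (h0 m hm) with hs | hs
      · -- r m < 0, all r j < 0
        have hrm : r m < 0 := by
          rcases lt_trichotomy (r m) 0 with h | h | h
          · exact h
          · exact absurd h (h0 m hm)
          · rw [Real.sign_of_pos h] at hs; norm_num at hs
        have h1 : ∀ j ∈ D', Real.sign (r j) = -1 := fun j hj =>
          Real.sign_of_neg (lt_trans (hlt j hj) hrm)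
        have h2 : ∀ j ∈ D', Real.sign (r j - r m) = -1 := fun j hj =>
          Real.sign_of_neg (by linarith [hlt j hj])
        rw [Finset.prod_congr rfl h1, Finset.prod_congr rfl h2, Finset.prod_const, hs]
        ring
      · rw [hs]; ring


lemma core_sg (D : Finset ℕ) (s g : ℕ → ℝ) (hs : ∀ j ∈ D, s j ≠ 0) (hg : ∀ j ∈ D, g j ≠ 0)
    (hx : ∀ j ∈ D, ∀ l ∈ D, j ≠ l → s j * g l - s l * g j ≠ 0) :
    ∑ ℓ ∈ D, (Real.sign (s ℓ) - Real.sign (g ℓ)) *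
        ∏ j ∈ D.erase ℓ, Real.sign (s j - g j / g ℓ * s ℓ)
      = ∏ j ∈ D, Real.sign (s j) - ∏ j ∈ D, Real.sign (g j) := by
  set r : ℕ → ℝ := fun j => s j / g j with hr
  have hr0 : ∀ j ∈ D, r j ≠ 0 := fun j hj => div_ne_zero (hs j hj) (hg j hj)
  have hrinj : ∀ j ∈ D, ∀ l ∈ D, j ≠ l → r j ≠ r l := by
    intro j hj l hl hjl h
    apply hx j hj l hl hjl
    have hgj := hg j hj
    have hgl := hg l hl
    have h' : s j * g l = s l * g j := by
      rw [show r j = s j / g j from rfl, show r l = s l / g l from rfl, div_eq_div_iff hgj hgl] at h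
      linarith [h]
    rw [h']; ring
  have key : ∀ ℓ ∈ D, (Real.sign (s ℓ) - Real.sign (g ℓ)) *
      ∏ j ∈ D.erase ℓ, Real.sign (s j - g j / g ℓ * s ℓ)
      = (∏ j ∈ D, Real.sign (g j)) *
        ((Real.sign (r ℓ) - 1) * ∏ j ∈ D.erase ℓ, Real.sign (r j - r ℓ)) := by
    intro ℓ hℓ
    have hgl := hg ℓ hℓ
    have h1 : ∀ j ∈ D.erase ℓ, Real.sign (s j - g j / g ℓ * s ℓ)
        = Real.sign (g j) * Real.sign (r j - r ℓ) := by
      intro j hj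
      have hgj := hg j (Finset.mem_of_mem_erase hj)
      rw [← sign_mul']
      congr 1
      simp only [hr]
      field_simp
    have h2 : Real.sign (g ℓ) * Real.sign (g ℓ) = 1 := by
      rcases Real.sign_apply_eq_of_ne_zero (g ℓ) hgl with h | h <;> rw [h] <;> norm_num
    have h3 : Real.sign (r ℓ) = Real.sign (s ℓ) * Real.sign (g ℓ) := by
      show Real.sign (s ℓ / g ℓ) = _
      rw [div_eq_mul_inv, sign_mul', Real.sign_inv]
    have hsg : Real.sign (s ℓ) - Real.sign (g ℓ)
        = Real.sign (g ℓ) * (Real.sign (r ℓ) - 1) := by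
      rw [h3]; linear_combination (-Real.sign (s ℓ)) * h2
    rw [Finset.prod_congr rfl h1, Finset.prod_mul_distrib, hsg,
      ← Finset.mul_prod_erase D (fun j => Real.sign (g j)) hℓ]
    ring
  rw [Finset.sum_congr rfl key, ← Finset.mul_sum,
    core_r D r hr0 hrinj]
  have h4 : ∏ j ∈ D, Real.sign (s j) = (∏ j ∈ D, Real.sign (r j)) * ∏ j ∈ D, Real.sign (g j) := by
    rw [← Finset.prod_mul_distrib]
    apply Finset.prod_congr rfl
    intro j hj
    have h2 : Real.sign (g j) * Real.sign (g j) = 1 := by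
      rcases Real.sign_apply_eq_of_ne_zero (g j) (hg j hj) with h | h <;> rw [h] <;> norm_num
    have h3 : Real.sign (r j) = Real.sign (s j) * Real.sign (g j) := by
      show Real.sign (s j / g j) = _
      rw [div_eq_mul_inv, sign_mul', Real.sign_inv]
    rw [h3]; linear_combination (-Real.sign (s j)) * h2
  rw [h4]; ring


def compF (m : ℕ) : Finset (List ℕ) :=
  Finset.univ.image (Composition.blocks (n := m))

lemma mem_compF {m : ℕ} {L : List ℕ} :
    L ∈ compF m ↔ L.sum = m ∧ ∀ q ∈ L, 0 < q := by
  constructor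
  · intro h
    obtain ⟨C, -, rfl⟩ := Finset.mem_image.1 h
    exact ⟨C.blocks_sum, fun q hq => C.blocks_pos hq⟩
  · rintro ⟨h1, h2⟩
    exact Finset.mem_image.2 ⟨⟨L, fun hq => h2 _ hq, h1⟩, Finset.mem_univ _, rfl⟩

lemma Fcomp_eq (b : ℕ → ℝ) (x : List ℝ) :
    Fcomp b x = ((2 : ℝ) ^ (x.length - 1))⁻¹ *
      ∑ L ∈ compF x.length,
        (L.map b).prod *
          ∏ k ∈ Finset.range (L.length - 1),
            Real.sign ((x.take ((L.take (k + 1)).sum)).sum) := by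
  rw [Fcomp]
  congr 1
  rw [← finsum_mem_coe_finset]
  congr 1
  ext L
  simp [mem_compF]


def cutF (L : List ℕ) : Finset ℕ :=
  (Finset.range (L.length - 1)).image (fun k => (L.take (k + 1)).sum)

lemma cut_bounds {L : List ℕ} (hpos : ∀ q ∈ L, 0 < q) {k : ℕ} (hk : k < L.length - 1) :
    1 ≤ (L.take (k + 1)).sum ∧ (L.take (k + 1)).sum < L.sum := by
  have hlen : k + 1 < L.length := by omega
  have hsplit : (L.take (k+1)).sum + (L.drop (k+1)).sum = L.sum := by
    rw [← List.sum_append, List.take_append_drop]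
  have h1 : (L.take (k+1)) ≠ [] := by
    apply List.ne_nil_of_length_pos
    rw [List.length_take]; omega
  have h2 : (L.drop (k+1)) ≠ [] := by
    apply List.ne_nil_of_length_pos
    rw [List.length_drop]; omega
  have p1 : 0 < (L.take (k+1)).sum :=
    List.sum_pos _ (fun q hq => hpos q (List.take_subset _ _ hq)) h1
  have p2 : 0 < (L.drop (k+1)).sum :=
    List.sum_pos _ (fun q hq => hpos q (List.drop_subset _ _ hq)) h2
  omega

lemma mem_cutF_bounds {L : List ℕ} (hpos : ∀ q ∈ L, 0 < q) {j : ℕ} (hj : j ∈ cutF L) :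
    1 ≤ j ∧ j < L.sum := by
  obtain ⟨k, hk, rfl⟩ := Finset.mem_image.1 hj
  exact cut_bounds hpos (Finset.mem_range.1 hk)

lemma cut_strictMono {L : List ℕ} (hpos : ∀ q ∈ L, 0 < q) {k k' : ℕ}
    (h : k < k') (h' : k' + 1 ≤ L.length) :
    (L.take (k + 1)).sum < (L.take (k' + 1)).sum := by
  have heq : L.take (k' + 1) = L.take (k + 1) ++ (L.drop (k + 1)).take (k' - k) := by
    rw [← List.take_add]; congr 1; omega
  rw [heq, List.sum_append]
  have hne : (L.drop (k+1)).take (k'-k) ≠ [] := by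
    apply List.ne_nil_of_length_pos
    rw [List.length_take, List.length_drop]; omega
  have := List.sum_pos _
    (fun q hq => hpos q (List.drop_subset _ _ (List.take_subset _ _ hq))) hne
  omega

lemma prod_cutF {L : List ℕ} (hpos : ∀ q ∈ L, 0 < q) (f : ℕ → ℝ) :
    ∏ j ∈ cutF L, f j
      = ∏ k ∈ Finset.range (L.length - 1), f ((L.take (k + 1)).sum) := by
  rw [cutF, Finset.prod_image]
  intro k hk k' hk' h
  rw [Finset.mem_coe, Finset.mem_range] at hk hk'
  by_contra hne
  rcases Nat.lt_or_ge k k' with hlt | hge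
  · exact absurd h (Nat.ne_of_lt (cut_strictMono hpos hlt (by omega)))
  · have : k' < k := by omega
    exact absurd h.symm (Nat.ne_of_lt (cut_strictMono hpos this (by omega)))

lemma cut_append_low {A B : List ℕ} {k : ℕ} (h : k + 1 ≤ A.length) :
    ((A ++ B).take (k + 1)).sum = (A.take (k + 1)).sum := by
  rw [List.take_append, List.sum_append]
  have h0 : k + 1 - A.length = 0 := by omega
  simp [h0]

lemma cut_append_high {A B : List ℕ} {k : ℕ} (h : A.length ≤ k) :
    ((A ++ B).take (k + 1)).sum = A.sum + (B.take (k + 1 - A.length)).sum := by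
  rw [List.take_append, List.sum_append,
    List.take_of_length_le (by omega)]

lemma cutF_append {A B : List ℕ} (hA : A ≠ []) (hB : B ≠ []) :
    cutF (A ++ B) = insert A.sum (cutF A ∪ (cutF B).image (fun j => A.sum + j)) := by
  have ha : 1 ≤ A.length := List.length_pos_iff.2 hA
  have hb : 1 ≤ B.length := List.length_pos_iff.2 hB
  ext j
  simp only [cutF, Finset.mem_insert, Finset.mem_union, Finset.mem_image, Finset.mem_range,
    List.length_append]
  constructor
  · rintro ⟨k, hk, rfl⟩
    rcases Nat.lt_trichotomy k (A.length - 1) with h | h | h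
    · right; left
      exact ⟨k, h, (cut_append_low (by omega)).symm⟩
    · left
      rw [cut_append_low (by omega)]
      have : k + 1 = A.length := by omega
      rw [this, List.take_length]
    · right; right
      refine ⟨(B.take (k + 1 - A.length)).sum, ⟨k - A.length, by omega, ?_⟩,
        (cut_append_high (by omega)).symm⟩
      have he : k - A.length + 1 = k + 1 - A.length := by omega
      rw [he]
  · rintro (rfl | ⟨k, hk, rfl⟩ | ⟨j', ⟨k, hk, rfl⟩, rfl⟩)
    · refine ⟨A.length - 1, by omega, ?_⟩
      rw [cut_append_low (by omega)]
      have : A.length - 1 + 1 = A.length := by omega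
      rw [this, List.take_length]
    · exact ⟨k, by omega, cut_append_low (by omega)⟩
    · have hk2 : k + A.length < A.length + B.length - 1 := by omega
      refine ⟨k + A.length, hk2, ?_⟩
      rw [cut_append_high (by omega)]
      have he : k + A.length + 1 - A.length = k + 1 := by omega
      rw [he]


lemma pos_ne_nil_of_sum {A : List ℕ} (h : 1 ≤ A.sum) : A ≠ [] := by
  rintro rfl; simp at h

lemma Fcomp_take_drop (b : ℕ → ℝ) (xl : List ℝ) (n ℓ : ℕ) (hn : 2 ≤ n)
    (hlen : xl.length = n) (h1 : 1 ≤ ℓ) (h2 : ℓ ≤ n - 1) (φ : ℕ → ℝ)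
    (hφ : ∀ j, ((xl.take j).sum) = φ j) (hφℓ : φ ℓ = 0) :
    Fcomp b (xl.take ℓ) * Fcomp b (xl.drop ℓ)
      = ((2 : ℝ) ^ (n - 2))⁻¹ *
          ∑ C ∈ (compF n).filter (fun C => ℓ ∈ cutF C),
            (C.map b).prod * ∏ j ∈ (cutF C).erase ℓ, Real.sign (φ j) := by
  have hℓn : ℓ ≤ n := by omega
  have hlt : (xl.take ℓ).length = ℓ := by rw [List.length_take, hlen]; omega
  have hld : (xl.drop ℓ).length = n - ℓ := by rw [List.length_drop, hlen]
  rw [Fcomp_eq, Fcomp_eq, hlt, hld]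
  have hA : ∀ A ∈ compF ℓ,
      (A.map b).prod * ∏ k ∈ Finset.range (A.length - 1),
          Real.sign (((xl.take ℓ).take ((A.take (k + 1)).sum)).sum)
        = (A.map b).prod * ∏ j ∈ cutF A, Real.sign (φ j) := by
    intro A hA
    obtain ⟨hsum, hpos⟩ := mem_compF.1 hA
    congr 1
    rw [prod_cutF hpos]
    apply Finset.prod_congr rfl
    intro k hk
    have hb := cut_bounds hpos (Finset.mem_range.1 hk)
    have hle : (A.take (k + 1)).sum ≤ ℓ := by omega
    rw [List.take_take, min_eq_left hle, hφ]
  have hdropsum : ∀ j, (((xl.drop ℓ).take j).sum) = φ (ℓ + j) := by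
    intro j
    have e1 : xl.take (ℓ + j) = xl.take ℓ ++ (xl.drop ℓ).take j := List.take_add
    have e2 : φ (ℓ + j) = φ ℓ + ((xl.drop ℓ).take j).sum := by
      rw [← hφ (ℓ + j), e1, List.sum_append, hφ ℓ]
    rw [e2, hφℓ, zero_add]
  have hB : ∀ B ∈ compF (n - ℓ),
      (B.map b).prod * ∏ k ∈ Finset.range (B.length - 1),
          Real.sign (((xl.drop ℓ).take ((B.take (k + 1)).sum)).sum)
        = (B.map b).prod * ∏ j ∈ cutF B, Real.sign (φ (ℓ + j)) := by
    intro B hB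
    obtain ⟨hsum, hpos⟩ := mem_compF.1 hB
    congr 1
    rw [prod_cutF hpos]
    apply Finset.prod_congr rfl
    intro k hk
    rw [hdropsum]
  rw [Finset.sum_congr rfl hA, Finset.sum_congr rfl hB]
  rw [mul_mul_mul_comm]
  have hpow : ((2:ℝ) ^ (ℓ - 1))⁻¹ * ((2:ℝ) ^ (n - ℓ - 1))⁻¹ = ((2:ℝ) ^ (n - 2))⁻¹ := by
    rw [← mul_inv, ← pow_add, show ℓ - 1 + (n - ℓ - 1) = n - 2 by omega]
  rw [hpow]
  congr 1
  rw [Finset.sum_mul_sum, ← Finset.sum_product']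
  apply Finset.sum_nbij (i := fun p : List ℕ × List ℕ => p.1 ++ p.2)
  · rintro ⟨A, B⟩ hp
    rw [Finset.mem_product] at hp
    obtain ⟨hsA0, hpA0⟩ := mem_compF.1 hp.1
    obtain ⟨hsB0, hpB0⟩ := mem_compF.1 hp.2
    have hsA : A.sum = ℓ := hsA0
    have hpA : ∀ q ∈ A, 0 < q := hpA0
    have hsB : B.sum = n - ℓ := hsB0
    have hpB : ∀ q ∈ B, 0 < q := hpB0
    have hAne : A ≠ [] := pos_ne_nil_of_sum (by omega)
    have hBne : B ≠ [] := pos_ne_nil_of_sum (by omega)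
    rw [Finset.mem_filter]
    constructor
    · rw [mem_compF, List.sum_append]
      exact ⟨by omega, fun q hq => by
        rcases List.mem_append.1 hq with h | h
        exacts [hpA q h, hpB q h]⟩
    · rw [cutF_append hAne hBne, hsA]
      exact Finset.mem_insert_self _ _
  · rintro ⟨A, B⟩ hp ⟨A', B'⟩ hp' heq
    simp only [Finset.coe_product, Set.mem_prod, Finset.mem_coe] at hp hp'
    obtain ⟨hsA, hpA⟩ := mem_compF.1 hp.1
    obtain ⟨hsA', hpA'⟩ := mem_compF.1 hp'.1
    simp only at heq
    have hlenAB : A.length = A'.length := by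
      by_contra hne
      rcases Nat.lt_or_ge A.length A'.length with hlt2 | hge
      · -- A is a proper prefix of A'
        have h3 : A'.take A.length = A := by
          have h := congrArg (List.take A.length) heq
          simp only [List.take_append] at h
          rw [show A.length - A.length = 0 by omega,
            show A.length - A'.length = 0 by omega] at h
          simp only [List.take_zero, List.append_nil, List.take_length] at h
          exact h.symm
        have h4 : A'.sum = A.sum + (A'.drop A.length).sum := by
          conv_lhs => rw [← List.take_append_drop A.length A', List.sum_append, h3]
        have h5 : (A'.drop A.length) ≠ [] := by
          apply List.ne_nil_of_length_pos
          rw [List.length_drop]; omega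
        have h6 : 0 < (A'.drop A.length).sum :=
          List.sum_pos _ (fun q hq => hpA' q (List.drop_subset _ _ hq)) h5
        omega
      · have hlt2 : A'.length < A.length := by omega
        have h3 : A.take A'.length = A' := by
          have h := congrArg (List.take A'.length) heq.symm
          simp only [List.take_append] at h
          rw [show A'.length - A'.length = 0 by omega,
            show A'.length - A.length = 0 by omega] at h
          simp only [List.take_zero, List.append_nil, List.take_length] at h
          exact h.symm
        have h4 : A.sum = A'.sum + (A.drop A'.length).sum := by
          conv_lhs => rw [← List.take_append_drop A'.length A, List.sum_append, h3]
        have h5 : (A.drop A'.length) ≠ [] := by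
          apply List.ne_nil_of_length_pos
          rw [List.length_drop]; omega
        have h6 : 0 < (A.drop A'.length).sum :=
          List.sum_pos _ (fun q hq => hpA q (List.drop_subset _ _ hq)) h5
        omega
    obtain ⟨hAeq, hBeq⟩ := List.append_inj heq hlenAB
    simp [hAeq, hBeq, Prod.ext_iff]
  · intro C hC
    rw [Finset.coe_filter, Set.mem_setOf_eq] at hC
    obtain ⟨hCm, hcut⟩ := hC
    obtain ⟨hsum, hpos⟩ := mem_compF.1 hCm
    obtain ⟨k, hk, hck⟩ := Finset.mem_image.1 hcut
    rw [Finset.mem_range] at hk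
    refine ⟨(C.take (k + 1), C.drop (k + 1)), ?_, ?_⟩
    · have hsplit : (C.take (k + 1)).sum + (C.drop (k + 1)).sum = C.sum := by
        rw [← List.sum_append, List.take_append_drop]
      simp only [Finset.coe_product, Set.mem_prod, Finset.mem_coe]
      constructor
      · rw [mem_compF]
        exact ⟨hck, fun q hq => hpos q (List.take_subset _ _ hq)⟩
      · rw [mem_compF]
        exact ⟨by omega, fun q hq => hpos q (List.drop_subset _ _ hq)⟩
    · simp [List.take_append_drop]
  · rintro ⟨A, B⟩ hp
    rw [Finset.mem_product] at hp
    obtain ⟨hsA0, hpA0⟩ := mem_compF.1 hp.1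
    obtain ⟨hsB0, hpB0⟩ := mem_compF.1 hp.2
    have hsA : A.sum = ℓ := hsA0
    have hpA : ∀ q ∈ A, 0 < q := hpA0
    have hsB : B.sum = n - ℓ := hsB0
    have hpB : ∀ q ∈ B, 0 < q := hpB0
    have hAne : A ≠ [] := pos_ne_nil_of_sum (by omega)
    have hBne : B ≠ [] := pos_ne_nil_of_sum (by omega)
    simp only
    have hpb : ((A ++ B).map b).prod = (A.map b).prod * (B.map b).prod := by
      rw [List.map_append, List.prod_append]
    have hcut : cutF (A ++ B) = insert ℓ (cutF A ∪ (cutF B).image (fun j => ℓ + j)) := by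
      rw [cutF_append hAne hBne, hsA]
    have hnotmem : ℓ ∉ cutF A ∪ (cutF B).image (fun j => ℓ + j) := by
      rw [Finset.mem_union]
      rintro (h | h)
      · have := mem_cutF_bounds hpA h
        omega
      · obtain ⟨j, hj, hje⟩ := Finset.mem_image.1 h
        have := mem_cutF_bounds hpB hj
        omega
    have hdisj : Disjoint (cutF A) ((cutF B).image (fun j => ℓ + j)) := by
      rw [Finset.disjoint_left]
      intro j hj hj'
      have h1' := mem_cutF_bounds hpA hj
      obtain ⟨j', hj', hje⟩ := Finset.mem_image.1 hj'
      have h2' := mem_cutF_bounds hpB hj'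
      omega
    rw [hpb, hcut, Finset.erase_insert hnotmem, Finset.prod_union hdisj,
      Finset.prod_image (by intro a _ a' _ h; simp only at h; omega)]
    ring


/-- with `S_k = c₁+⋯+c_k`, `β_{ni} = ∑_j γ_{ji}`,
`Γ_{nℓ} = ∑_i ∑_{j≤ℓ} γ_{ij}`, `c_i^{(ℓ)} = c_i − (β_{ni}/Γ_{nℓ}) S_ℓ`, and assuming
`S_ℓ ≠ 0`, `Γ_{nℓ} ≠ 0` for `1 ≤ ℓ ≤ n−1` and `S_j Γ_{nℓ} − S_ℓ Γ_{nj} ≠ 0` for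
`j ≠ ℓ`, the functions `F_m` satisfy
`(1/2) ∑_ℓ (sgn S_ℓ − sgn Γ_{nℓ}) F_ℓ(c^{(ℓ)}₁..ℓ) F_{n−ℓ}(c^{(ℓ)}_{ℓ+1..n})
 = F_n(c₁,…,c_n) − F_n(β_{n1},…,β_{nn})` for an arbitrary sequence `b`. -/
theorem Fcomp_recursion (n : ℕ) (hn : 2 ≤ n)
    (γ : Fin n → Fin n → ℝ) (hanti : ∀ i j, γ i j = -γ j i)
    (c : Fin n → ℝ) (hc : ∑ i, c i = 0) (b : ℕ → ℝ)
    (S : ℕ → ℝ) (hS_def : ∀ k, S k = ∑ i ∈ Finset.univ.filter (fun i : Fin n => (i : ℕ) < k), c i)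
    (β : Fin n → ℝ) (hβ_def : ∀ i, β i = ∑ j, γ j i)
    (Γ : ℕ → ℝ)
    (hΓ_def : ∀ ℓ, Γ ℓ = ∑ i, ∑ j ∈ Finset.univ.filter (fun j : Fin n => (j : ℕ) < ℓ), γ i j)
    (hS : ∀ ℓ, 1 ≤ ℓ → ℓ ≤ n - 1 → S ℓ ≠ 0)
    (hΓ : ∀ ℓ, 1 ≤ ℓ → ℓ ≤ n - 1 → Γ ℓ ≠ 0)
    (hSΓ : ∀ j ℓ, 1 ≤ j → j ≤ n - 1 → 1 ≤ ℓ → ℓ ≤ n - 1 → j ≠ ℓ →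
      S j * Γ ℓ - S ℓ * Γ j ≠ 0) :
    (1 / 2 : ℝ) * ∑ ℓ ∈ Finset.Icc 1 (n - 1),
        (Real.sign (S ℓ) - Real.sign (Γ ℓ)) *
          Fcomp b ((List.ofFn (fun i : Fin n => c i - (β i / Γ ℓ) * S ℓ)).take ℓ) *
          Fcomp b ((List.ofFn (fun i : Fin n => c i - (β i / Γ ℓ) * S ℓ)).drop ℓ)
      = Fcomp b (List.ofFn c) - Fcomp b (List.ofFn β) := by
  have hβsum : ∀ j : ℕ,
      (∑ i ∈ Finset.univ.filter (fun i : Fin n => (i : ℕ) < j), β i) = Γ j := by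
    intro j
    rw [hΓ_def j, Finset.sum_comm]
    exact Finset.sum_congr rfl (fun k _ => hβ_def k)
  have hcS : ∀ j : ℕ, ((List.ofFn c).take j).sum = S j := by
    intro j
    rw [List.sum_take_ofFn]
    exact (hS_def j).symm
  have hbG : ∀ j : ℕ, ((List.ofFn β).take j).sum = Γ j := by
    intro j
    rw [List.sum_take_ofFn]
    exact hβsum j
  -- the per-ℓ transformation
  have key : ∀ ℓ ∈ Finset.Icc 1 (n - 1),
      (Real.sign (S ℓ) - Real.sign (Γ ℓ)) *
          Fcomp b ((List.ofFn (fun i : Fin n => c i - (β i / Γ ℓ) * S ℓ)).take ℓ) *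
          Fcomp b ((List.ofFn (fun i : Fin n => c i - (β i / Γ ℓ) * S ℓ)).drop ℓ)
        = ((2 : ℝ) ^ (n - 2))⁻¹ *
            ∑ C ∈ (compF n).filter (fun C => ℓ ∈ cutF C),
              (C.map b).prod * ((Real.sign (S ℓ) - Real.sign (Γ ℓ)) *
                ∏ j ∈ (cutF C).erase ℓ, Real.sign (S j - Γ j / Γ ℓ * S ℓ)) := by
    intro ℓ hℓ
    rw [Finset.mem_Icc] at hℓ
    have hΓℓ := hΓ ℓ hℓ.1 hℓ.2
    have hφ : ∀ j, (((List.ofFn (fun i : Fin n => c i - (β i / Γ ℓ) * S ℓ)).take j).sum)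
        = S j - Γ j / Γ ℓ * S ℓ := by
      intro j
      rw [List.sum_take_ofFn, Finset.sum_sub_distrib]
      congr 1
      · exact (hS_def j).symm
      · rw [← Finset.sum_mul, ← Finset.sum_div, hβsum j]
    have hφℓ : S ℓ - Γ ℓ / Γ ℓ * S ℓ = 0 := by
      rw [div_self hΓℓ]; ring
    rw [mul_assoc,
      Fcomp_take_drop b _ n ℓ hn (by simp) hℓ.1 hℓ.2
        (fun j => S j - Γ j / Γ ℓ * S ℓ) hφ hφℓ]
    rw [mul_left_comm]
    congr 1
    rw [Finset.mul_sum]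
    exact Finset.sum_congr rfl (fun C _ => by ring)
  rw [Finset.sum_congr rfl key, ← Finset.mul_sum, ← mul_assoc]
  have hhalf : (1 / 2 : ℝ) * ((2 : ℝ) ^ (n - 2))⁻¹ = ((2 : ℝ) ^ (n - 1))⁻¹ := by
    rw [show n - 1 = (n - 2) + 1 by omega, pow_succ, mul_inv]
    ring
  rw [hhalf]
  -- swap the sums
  have hswap : ∑ ℓ ∈ Finset.Icc 1 (n - 1),
      ∑ C ∈ (compF n).filter (fun C => ℓ ∈ cutF C),
        (C.map b).prod * ((Real.sign (S ℓ) - Real.sign (Γ ℓ)) *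
          ∏ j ∈ (cutF C).erase ℓ, Real.sign (S j - Γ j / Γ ℓ * S ℓ))
      = ∑ C ∈ compF n,
          (C.map b).prod * (∏ j ∈ cutF C, Real.sign (S j) - ∏ j ∈ cutF C, Real.sign (Γ j)) := by
    have e1 : ∀ ℓ ∈ Finset.Icc 1 (n - 1),
        ∑ C ∈ (compF n).filter (fun C => ℓ ∈ cutF C),
          (C.map b).prod * ((Real.sign (S ℓ) - Real.sign (Γ ℓ)) *
            ∏ j ∈ (cutF C).erase ℓ, Real.sign (S j - Γ j / Γ ℓ * S ℓ))
        = ∑ C ∈ compF n, (if ℓ ∈ cutF C then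
            (C.map b).prod * ((Real.sign (S ℓ) - Real.sign (Γ ℓ)) *
              ∏ j ∈ (cutF C).erase ℓ, Real.sign (S j - Γ j / Γ ℓ * S ℓ)) else 0) := by
      intro ℓ _
      rw [Finset.sum_filter]
    rw [Finset.sum_congr rfl e1, Finset.sum_comm]
    apply Finset.sum_congr rfl
    intro C hC
    obtain ⟨hsum, hpos⟩ := mem_compF.1 hC
    have hsub : cutF C ⊆ Finset.Icc 1 (n - 1) := by
      intro j hj
      have := mem_cutF_bounds hpos hj
      rw [Finset.mem_Icc]
      omega
    rw [Finset.sum_ite_mem, Finset.inter_eq_right.2 hsub, ← Finset.mul_sum]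
    congr 1
    apply core_sg
    · intro j hj
      have := mem_cutF_bounds hpos hj
      exact hS j this.1 (by omega)
    · intro j hj
      have := mem_cutF_bounds hpos hj
      exact hΓ j this.1 (by omega)
    · intro j hj l hl hjl
      have h1 := mem_cutF_bounds hpos hj
      have h2 := mem_cutF_bounds hpos hl
      exact hSΓ j l h1.1 (by omega) h2.1 (by omega) hjl
  rw [hswap]
  -- right-hand side
  rw [Fcomp_eq b (List.ofFn c), Fcomp_eq b (List.ofFn β)]
  simp only [List.length_ofFn]
  have hRc : ∀ C ∈ compF n,
      (C.map b).prod * ∏ k ∈ Finset.range (C.length - 1),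
          Real.sign (((List.ofFn c).take ((C.take (k + 1)).sum)).sum)
        = (C.map b).prod * ∏ j ∈ cutF C, Real.sign (S j) := by
    intro C hC
    obtain ⟨hsum, hpos⟩ := mem_compF.1 hC
    congr 1
    rw [prod_cutF hpos]
    exact Finset.prod_congr rfl (fun k _ => by rw [hcS])
  have hRb : ∀ C ∈ compF n,
      (C.map b).prod * ∏ k ∈ Finset.range (C.length - 1),
          Real.sign (((List.ofFn β).take ((C.take (k + 1)).sum)).sum)
        = (C.map b).prod * ∏ j ∈ cutF C, Real.sign (Γ j) := by
    intro C hC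
    obtain ⟨hsum, hpos⟩ := mem_compF.1 hC
    congr 1
    rw [prod_cutF hpos]
    exact Finset.prod_congr rfl (fun k _ => by rw [hbG])
  rw [Finset.sum_congr rfl hRc, Finset.sum_congr rfl hRb, ← mul_sub,
    ← Finset.sum_sub_distrib]
  congr 1
  exact Finset.sum_congr rfl (fun C _ => by ring)
end

section
/- For every nonzero real number u: (i/π) ∫_ℝ e^{−πt²}/(t − iu) dt = −sgn(u) · e^{πu²} · (1 − 2∫_0^{|u|} e^{−πs²} ds). Equivalently, the function M_1(u) defined by the contour integral (i/π)∫_{ℝ−iu} e^{−πz² − 2πizu} dz/z (the contour being the horizontal line z = t − iu, t ∈ ℝ) equals −sgn(u)·Erfc(√π·|u|). -/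
open MeasureTheory Real Set Complex Filter

/-- Half-line integral of a decaying complex exponential. -/
lemma aux_integral_cexp_Ioi (c : ℂ) (hc : 0 < c.re) :
    ∫ x : ℝ in Ioi (0:ℝ), Complex.exp (-c * x) = 1 / c := by
  have hcne : c ≠ 0 := by intro h; simp [h] at hc
  have hderiv : ∀ x ∈ Ici (0:ℝ), HasDerivAt (fun x : ℝ => -c⁻¹ * Complex.exp (-c * x))
      (Complex.exp (-c * x)) x := by
    intro x _
    have h1 : HasDerivAt (fun x : ℝ => -c * (x:ℂ)) (-c) x := by
      simpa using (Complex.ofRealCLM.hasDerivAt.const_mul (-c))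
    have := (h1.cexp).const_mul (-c⁻¹)
    exact this.congr_deriv (by rw [mul_comm (Complex.exp _) (-c), ← mul_assoc, neg_mul_neg, inv_mul_cancel₀ hcne, one_mul])
  have hint : IntegrableOn (fun x : ℝ => Complex.exp (-c * x)) (Ioi 0) := by
    refine Integrable.mono' (exp_neg_integrableOn_Ioi 0 hc) ?_ ?_
    · exact (Complex.continuous_exp.comp (by continuity)).aestronglyMeasurable
    · filter_upwards with x
      rw [Complex.norm_exp]
      simp [neg_mul]
  have htend : Filter.Tendsto (fun x : ℝ => -c⁻¹ * Complex.exp (-c * x)) Filter.atTop (nhds 0) := by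
    rw [show (0:ℂ) = -c⁻¹ * 0 by ring]
    refine Filter.Tendsto.const_mul _ ?_
    rw [tendsto_zero_iff_norm_tendsto_zero]
    have : (fun x : ℝ => ‖Complex.exp (-c * x)‖) = fun x : ℝ => Real.exp (-(c.re * x)) := by
      ext x; rw [Complex.norm_exp]; simp [neg_mul]
    rw [this]
    exact Real.tendsto_exp_atBot.comp (Filter.tendsto_neg_atBot_iff.mpr
      (Filter.Tendsto.const_mul_atTop hc Filter.tendsto_id))
  rw [integral_Ioi_of_hasDerivAt_of_tendsto' hderiv hint htend]
  simp

/-- Inner Gaussian integral with complex linear term. -/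
lemma aux_inner_integral (u x : ℝ) :
    ∫ t : ℝ, Complex.exp (-(Real.pi * t^2)) * Complex.exp (-((u:ℂ) + t * Complex.I) * x)
      = Complex.exp (-(u:ℂ) * x - x^2 / (4 * Real.pi)) := by
  have h : ∀ t : ℝ, Complex.exp (-(Real.pi * t^2)) * Complex.exp (-((u:ℂ) + t * Complex.I) * x)
      = Complex.exp (-(Real.pi:ℂ) * t^2 + (-(x:ℂ) * Complex.I) * t + (-(u:ℂ) * x)) := by
    intro t
    rw [← Complex.exp_add]
    ring_nf
  simp_rw [h]
  rw [integral_cexp_quadratic (by simpa using Real.pi_pos) (-(x:ℂ) * Complex.I) (-(u:ℂ) * x)]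
  have hpi : (Real.pi : ℂ) ≠ 0 := Complex.ofReal_ne_zero.mpr Real.pi_ne_zero
  rw [neg_neg, div_self hpi, Complex.one_cpow, one_mul]
  congr 1
  have : (-(x:ℂ) * Complex.I)^2 = -(x:ℂ)^2 := by
    rw [mul_pow, Complex.I_sq]; ring
  rw [this]
  field_simp

/-- Integrability on the product space for the Fubini step. -/
lemma aux_prod_integrable (u : ℝ) (hu : 0 < u) :
    Integrable (Function.uncurry fun (t x : ℝ) =>
        Complex.exp (-(Real.pi * t^2)) * Complex.exp (-((u:ℂ) + t * Complex.I) * x))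
      (MeasureTheory.volume.prod (MeasureTheory.volume.restrict (Ioi 0))) := by
  have hmeas : AEStronglyMeasurable (Function.uncurry fun (t x : ℝ) =>
      Complex.exp (-(Real.pi * t^2)) * Complex.exp (-((u:ℂ) + t * Complex.I) * x))
      (MeasureTheory.volume.prod (MeasureTheory.volume.restrict (Ioi 0))) := by
    apply Continuous.aestronglyMeasurable
    apply Continuous.mul
    · exact Complex.continuous_exp.comp (by continuity)
    · exact Complex.continuous_exp.comp (by continuity)
  refine Integrable.mono'
    (g := fun p : ℝ × ℝ => Real.exp (-(Real.pi * p.1^2)) * Real.exp (-u * p.2)) ?_ hmeas ?_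
  · exact Integrable.mul_prod (by simpa [neg_mul] using integrable_exp_neg_mul_sq Real.pi_pos)
      (exp_neg_integrableOn_Ioi 0 hu)
  · filter_upwards with p
    rw [Function.uncurry]
    rw [norm_mul, Complex.norm_exp, Complex.norm_exp]
    apply le_of_eq
    have h1 : (-((Real.pi:ℂ) * (p.1:ℂ)^2)).re = -(Real.pi * p.1^2) := by
      rw [← Complex.ofReal_pow, ← Complex.ofReal_mul, ← Complex.ofReal_neg, Complex.ofReal_re]
    have h2 : (-((u:ℂ) + (p.1:ℂ) * Complex.I) * (p.2:ℂ)).re = -u * p.2 := by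
      simp [Complex.add_re, Complex.mul_re]
    rw [h1, h2]

/-- The real half-line Gaussian with linear term, by completing the square. -/
lemma aux_real_halfline (u : ℝ) :
    ∫ x in Ioi (0:ℝ), Real.exp (-(u*x) - x^2/(4*Real.pi))
      = Real.exp (Real.pi*u^2) *
        ((2*Real.sqrt Real.pi) * ∫ y in Ioi (Real.sqrt Real.pi * u), Real.exp (-y^2)) := by
  set c : ℝ := (2*Real.sqrt Real.pi)⁻¹ with hcdef
  set d : ℝ := Real.sqrt Real.pi * u with hddef
  have hs0 : Real.sqrt Real.pi ≠ 0 := Real.sqrt_ne_zero'.mpr Real.pi_pos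
  have hs : Real.sqrt Real.pi ^ 2 = Real.pi := Real.sq_sqrt Real.pi_pos.le
  have hc : 0 < c := by rw [hcdef]; positivity
  set g : ℝ → ℝ := fun y => Real.exp (-y^2) with hgdef
  set f : ℝ → ℝ := fun x => c*x + d with hfdef
  have key : ∀ x : ℝ, Real.exp (-(u*x) - x^2/(4*Real.pi))
      = Real.exp (Real.pi*u^2) * g (f x) := by
    intro x
    rw [hgdef, hfdef, ← Real.exp_add]
    congr 1
    rw [hcdef, hddef, ← hs]
    field_simp
    rw [Real.sqrt_sq (Real.sqrt_nonneg _)]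
    ring
  simp_rw [key]
  rw [integral_const_mul]
  congr 1
  have hg : Integrable g := by
    rw [hgdef]; simpa using integrable_exp_neg_mul_sq one_pos
  have subst : ∫ x in Ioi (0:ℝ), (g ∘ f) x * c = ∫ y in Ioi (f 0), g y := by
    apply MeasureTheory.integral_comp_mul_deriv_Ioi
    · exact (by continuity : Continuous f).continuousOn
    · exact tendsto_atTop_add_const_right _ d (Tendsto.const_mul_atTop hc tendsto_id)
    · intro x _
      exact (((hasDerivAt_id x).const_mul c).add_const d).hasDerivWithinAt.mono
        (by exact fun y hy => trivial) |>.congr_deriv (mul_one c)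
    · exact (by continuity : Continuous g).continuousOn
    · exact hg.integrableOn
    · exact ((hg.comp_add_right d).comp_mul_left' hc.ne').mul_const c |>.integrableOn
  have h0 : f 0 = d := by rw [hfdef]; simp
  rw [h0] at subst
  have : ∫ x in Ioi (0:ℝ), g (f x) = c⁻¹ * ∫ y in Ioi d, g y := by
    rw [← subst, MeasureTheory.integral_mul_const]
    field_simp
    rfl
  rw [this, hcdef, inv_inv]

/-- Splitting the Gaussian tail integral. -/
lemma aux_tail (a : ℝ) (ha : 0 < a) : ∫ y in Ioi (0:ℝ), Real.exp (-y^2)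
    = (∫ y in (0:ℝ)..a, Real.exp (-y^2)) + ∫ y in Ioi a, Real.exp (-y^2) := by
  have hint : IntegrableOn (fun y : ℝ => Real.exp (-y^2)) (Ioi (0:ℝ)) := by
    simpa using (integrable_exp_neg_mul_sq one_pos).integrableOn
  rw [← Ioc_union_Ioi_eq_Ioi ha.le, setIntegral_union (Ioc_disjoint_Ioi le_rfl) measurableSet_Ioi
    (hint.mono_set (by rw [← Ioc_union_Ioi_eq_Ioi ha.le]; exact subset_union_left))
    (hint.mono_set (by rw [← Ioc_union_Ioi_eq_Ioi ha.le]; exact subset_union_right))]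
  rw [intervalIntegral.integral_of_le ha.le]

/-- Rescaling the interval Gaussian integral. -/
lemma aux_interval (u : ℝ) : ∫ s in (0:ℝ)..u, Real.exp (-(Real.pi * s^2))
    = (Real.sqrt Real.pi)⁻¹ • ∫ y in (0:ℝ)..(Real.sqrt Real.pi * u), Real.exp (-y^2) := by
  have h : ∀ s : ℝ, Real.exp (-(Real.pi * s^2))
      = (fun y : ℝ => Real.exp (-y^2)) (Real.sqrt Real.pi * s) := by
    intro s
    simp only [mul_pow, Real.sq_sqrt Real.pi_pos.le]
  simp_rw [h]
  rw [intervalIntegral.integral_comp_mul_left (fun y => Real.exp (-y^2))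
    (Real.sqrt_ne_zero'.mpr Real.pi_pos)]
  simp only [mul_zero]

/-- The main computation for positive `u`. -/
lemma M1_eval_pos (u : ℝ) (hu : 0 < u) :
    (Complex.I / (Real.pi : ℂ)) *
        ∫ t : ℝ, (Real.exp (-(Real.pi * t ^ 2)) : ℂ) / ((t : ℂ) - Complex.I * (u : ℂ))
      = ((-1 * Real.exp (Real.pi * u ^ 2) *
          (1 - 2 * ∫ s in (0:ℝ)..u, Real.exp (-(Real.pi * s ^ 2))) : ℝ) : ℂ) := by
  -- Step 1: rewrite integrand via the half-line exponential representation
  have step1 : ∀ t : ℝ, (Real.exp (-(Real.pi * t ^ 2)) : ℂ) / ((t : ℂ) - Complex.I * (u : ℂ))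
      = Complex.I * ∫ x in Ioi (0:ℝ),
          Complex.exp (-(Real.pi * t^2)) * Complex.exp (-((u:ℂ) + t * Complex.I) * x) := by
    intro t
    have hden : ((t : ℂ) - Complex.I * (u : ℂ)) ≠ 0 := by
      intro h
      have := congrArg Complex.im h
      simp at this
      exact hu.ne' this
    have hrep : ∫ x in Ioi (0:ℝ), Complex.exp (-((u:ℂ) + t * Complex.I) * x)
        = 1 / ((u:ℂ) + t * Complex.I) := by
      apply aux_integral_cexp_Ioi
      simp [Complex.add_re]
      exact hu
    rw [MeasureTheory.integral_const_mul, hrep]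
    have hcast : (Real.exp (-(Real.pi * t ^ 2)) : ℂ) = Complex.exp (-(Real.pi * t^2)) := by
      rw [Complex.ofReal_exp]
      norm_cast
    rw [hcast]
    rw [div_eq_iff hden]
    have : ((u:ℂ) + t * Complex.I) ≠ 0 := by
      intro h
      have := congrArg Complex.re h
      simp at this
      exact hu.ne' this
    field_simp
    linear_combination (u:ℂ) * Complex.I_sq
  rw [funext step1, MeasureTheory.integral_const_mul]
  -- Step 2: Fubini
  rw [MeasureTheory.integral_integral_swap (aux_prod_integrable u hu)]
  -- Step 3: inner integral
  simp_rw [aux_inner_integral u]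
  -- Step 4: pass to a real integral
  have step4 : ∀ x : ℝ, x ∈ Ioi (0:ℝ) → Complex.exp (-(u:ℂ) * x - x^2 / (4 * Real.pi))
      = ((Real.exp (-(u*x) - x^2/(4*Real.pi)) : ℝ) : ℂ) := by
    intro x _
    rw [Complex.ofReal_exp]
    norm_cast
    ring_nf
  rw [setIntegral_congr_fun measurableSet_Ioi step4]
  rw [show ∫ x in Ioi (0:ℝ), ((Real.exp (-(u*x) - x^2/(4*Real.pi)) : ℝ) : ℂ)
      = ((∫ x in Ioi (0:ℝ), Real.exp (-(u*x) - x^2/(4*Real.pi)) : ℝ) : ℂ) from integral_ofReal]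
  -- Step 5: evaluate the real integral
  rw [aux_real_halfline u]
  have htail := aux_tail (Real.sqrt Real.pi * u) (by positivity)
  have hIoi0 : ∫ y in Ioi (0:ℝ), Real.exp (-y^2) = Real.sqrt Real.pi / 2 := by
    have := integral_gaussian_Ioi 1
    simpa using this
  have hint := aux_interval u
  have hs : Real.sqrt Real.pi ^ 2 = Real.pi := Real.sq_sqrt Real.pi_pos.le
  have hs0 : Real.sqrt Real.pi ≠ 0 := Real.sqrt_ne_zero'.mpr Real.pi_pos
  set S := ∫ s in (0:ℝ)..u, Real.exp (-(Real.pi * s^2)) with hS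
  have htail' : ∫ y in Ioi (Real.sqrt Real.pi * u), Real.exp (-y^2)
      = Real.sqrt Real.pi / 2 - Real.sqrt Real.pi * S := by
    rw [hIoi0] at htail
    have h2 : (∫ y in (0:ℝ)..(Real.sqrt Real.pi * u), Real.exp (-y^2)) = Real.sqrt Real.pi * S := by
      rw [hint, smul_eq_mul]
      field_simp
    rw [h2] at htail
    linarith
  rw [htail']
  -- Step 6: final algebra
  have hpine : (Real.pi : ℂ) ≠ 0 := Complex.ofReal_ne_zero.mpr Real.pi_ne_zero
  have hreal : Real.exp (Real.pi * u^2) * ((2*Real.sqrt Real.pi) *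
      (Real.sqrt Real.pi / 2 - Real.sqrt Real.pi * S))
      = Real.pi * (Real.exp (Real.pi * u^2) * (1 - 2*S)) := by
    have : (2*Real.sqrt Real.pi) * (Real.sqrt Real.pi / 2 - Real.sqrt Real.pi * S)
        = Real.pi * (1 - 2*S) := by
      linear_combination (1 - 2*S) * hs
    rw [this]; ring
  rw [hreal]
  push_cast
  rw [show ∀ z : ℂ, Complex.I / Real.pi * (Complex.I * ((Real.pi:ℂ) * z)) = -z from ?_]
  · push_cast [pow_two]
    ring
  · intro z
    rw [div_mul_eq_mul_div, mul_comm]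
    field_simp [Complex.I_sq]
    linear_combination z * Complex.I_sq

/-- for `u ≠ 0`,
`(i/π) ∫_ℝ e^{−πt²}/(t − iu) dt = −sgn(u) e^{πu²} (1 − 2∫_0^{|u|} e^{−πs²} ds)`,
i.e. `M₁(u) = −sgn(u)·Erfc(√π |u|)`. -/
theorem M1_eval (u : ℝ) (hu : u ≠ 0) :
    (Complex.I / (Real.pi : ℂ)) *
        ∫ t : ℝ, (Real.exp (-(Real.pi * t ^ 2)) : ℂ) / ((t : ℂ) - Complex.I * (u : ℂ))
      = ((-(Real.sign u) * Real.exp (Real.pi * u ^ 2) *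
          (1 - 2 * ∫ s in (0:ℝ)..|u|, Real.exp (-(Real.pi * s ^ 2))) : ℝ) : ℂ) := by
  rcases hu.lt_or_gt with hneg | hpos
  · -- negative case via conjugation
    have hv : 0 < -u := by linarith
    have key := M1_eval_pos (-u) hv
    have hconj : (∫ t : ℝ, (Real.exp (-(Real.pi * t ^ 2)) : ℂ) / ((t : ℂ) - Complex.I * (u : ℂ)))
        = starRingEnd ℂ (∫ t : ℝ, (Real.exp (-(Real.pi * t ^ 2)) : ℂ) /
            ((t : ℂ) - Complex.I * ((-u : ℝ) : ℂ))) := by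
      rw [← integral_conj]
      congr 1; ext t
      rw [map_div₀, Complex.conj_ofReal]
      congr 1
      simp only [map_sub, map_mul, Complex.conj_I, Complex.conj_ofReal]
      push_cast
      ring
    have hpine : (Real.pi : ℂ) ≠ 0 := Complex.ofReal_ne_zero.mpr Real.pi_ne_zero
    set B := ∫ t : ℝ, (Real.exp (-(Real.pi * t ^ 2)) : ℂ) /
        ((t : ℂ) - Complex.I * ((-u : ℝ) : ℂ)) with hB
    set Rv : ℝ := -1 * Real.exp (Real.pi * (-u) ^ 2) *
        (1 - 2 * ∫ s in (0:ℝ)..(-u), Real.exp (-(Real.pi * s ^ 2))) with hRv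
    have hBval : B = ((Real.pi : ℂ) / Complex.I) * (Rv : ℂ) := by
      have hIne : Complex.I ≠ 0 := Complex.I_ne_zero
      rw [← key]
      field_simp
    rw [hconj, hBval]
    rw [map_mul, map_div₀, Complex.conj_ofReal, Complex.conj_I, Complex.conj_ofReal]
    have hsign : Real.sign u = -1 := Real.sign_of_neg hneg
    have habs : |u| = -u := abs_of_neg hneg
    rw [hsign, habs]
    have : Complex.I / (Real.pi : ℂ) * ((Real.pi : ℂ) / (-Complex.I) * (Rv : ℂ)) = -(Rv : ℂ) := by
      have hIne : Complex.I ≠ 0 := Complex.I_ne_zero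
      field_simp
    rw [this, hRv]
    push_cast
    rw [neg_sq]
    ring
  · -- positive case
    rw [Real.sign_of_pos hpos, abs_of_pos hpos]
    have := M1_eval_pos u hpos
    convert this using 3
end

section
/- Let a, b ∈ ℝ² be such that a ≠ 0, b ≠ 0 and a + b ≠ 0. Then for every u ∈ ℝ²: ∫_{ℝ²} e^{−π‖u−w‖²} [ sgn(⟨a,w⟩)·sgn(⟨a+b,w⟩) + sgn(⟨b,w⟩)·sgn(⟨a+b,w⟩) − sgn(⟨a,w⟩)·sgn(⟨b,w⟩) ] dw = 1. Equivalently, the generalized error functions E_2(M;u) = ∫_{ℝ²} e^{−π‖u−w‖²} sgn(⟨m_1,w⟩)sgn(⟨m_2,w⟩) dw (for M with columns m_1, m_2) satisfy E_2((a, a+b); u) + E_2((b, a+b); u) = 1 + E_2((a, b); u). -/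
open scoped RealInnerProductSpace

open MeasureTheory

lemma sign_helper (x y : ℝ) (hx : x ≠ 0) (hy : y ≠ 0) (hxy : x + y ≠ 0) :
    Real.sign x * Real.sign (x + y) + Real.sign y * Real.sign (x + y) -
      Real.sign x * Real.sign y = 1 := by
  rcases hx.lt_or_gt with h | h <;> rcases hy.lt_or_gt with h' | h' <;>
    rcases hxy.lt_or_gt with h'' | h'' <;>
    simp [Real.sign_of_pos, Real.sign_of_neg, *] <;> linarith

lemma ker_null (a : EuclideanSpace ℝ (Fin 2)) (ha : a ≠ 0) :
    (volume : Measure (EuclideanSpace ℝ (Fin 2))) {w | ⟪a, w⟫ = 0} = 0 := by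
  have : {w : EuclideanSpace ℝ (Fin 2) | ⟪a, w⟫ = 0} =
      (LinearMap.ker (innerSL ℝ a).toLinearMap : Set (EuclideanSpace ℝ (Fin 2))) := by
    ext w; simp [LinearMap.mem_ker]
  rw [this]
  apply Measure.addHaar_submodule
  intro h
  have : ⟪a, a⟫ = 0 := by
    have := h ▸ (Submodule.mem_top (x := a) (R := ℝ))
    simpa [LinearMap.mem_ker] using this
  exact ha (by simpa using inner_self_eq_zero.mp this)

/-- for nonzero `a, b ∈ ℝ²` with `a + b ≠ 0` and any `u ∈ ℝ²`,
the Gaussian average of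
`sgn⟨a,w⟩ sgn⟨a+b,w⟩ + sgn⟨b,w⟩ sgn⟨a+b,w⟩ − sgn⟨a,w⟩ sgn⟨b,w⟩` equals `1`,
i.e. `E₂((a,a+b);u) + E₂((b,a+b);u) = 1 + E₂((a,b);u)`. -/
theorem generalized_error_identity (a b : EuclideanSpace ℝ (Fin 2))
    (ha : a ≠ 0) (hb : b ≠ 0) (hab : a + b ≠ 0) (u : EuclideanSpace ℝ (Fin 2)) :
    ∫ w : EuclideanSpace ℝ (Fin 2),
        Real.exp (-(Real.pi * ‖u - w‖ ^ 2)) *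
          (Real.sign ⟪a, w⟫ * Real.sign ⟪a + b, w⟫ +
            Real.sign ⟪b, w⟫ * Real.sign ⟪a + b, w⟫ -
            Real.sign ⟪a, w⟫ * Real.sign ⟪b, w⟫) = 1 := by
  have hae : ∀ᵐ w : EuclideanSpace ℝ (Fin 2),
      Real.exp (-(Real.pi * ‖u - w‖ ^ 2)) *
          (Real.sign ⟪a, w⟫ * Real.sign ⟪a + b, w⟫ +
            Real.sign ⟪b, w⟫ * Real.sign ⟪a + b, w⟫ -
            Real.sign ⟪a, w⟫ * Real.sign ⟪b, w⟫) =
        Real.exp (-(Real.pi * ‖u - w‖ ^ 2)) := by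
    have h1 := ker_null a ha
    have h2 := ker_null b hb
    have h3 := ker_null (a + b) hab
    rw [← compl_mem_ae_iff] at h1 h2 h3
    filter_upwards [h1, h2, h3] with w hw1 hw2 hw3
    have key : Real.sign ⟪a, w⟫ * Real.sign ⟪a + b, w⟫ +
        Real.sign ⟪b, w⟫ * Real.sign ⟪a + b, w⟫ -
        Real.sign ⟪a, w⟫ * Real.sign ⟪b, w⟫ = 1 := by
      have hsum : ⟪a + b, w⟫ = ⟪a, w⟫ + ⟪b, w⟫ := inner_add_left a b w
      rw [hsum]
      exact sign_helper _ _ hw1 hw2 (hsum ▸ hw3)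
    rw [key, mul_one]
  rw [integral_congr_ae hae]
  have : ∀ w : EuclideanSpace ℝ (Fin 2),
      Real.exp (-(Real.pi * ‖u - w‖ ^ 2)) =
        (fun v : EuclideanSpace ℝ (Fin 2) => Real.exp (-Real.pi * ‖v‖ ^ 2)) (w - u) := by
    intro w; simp [norm_sub_rev u w]
  simp_rw [this]
  rw [integral_sub_right_eq_self
    (fun v : EuclideanSpace ℝ (Fin 2) => Real.exp (-Real.pi * ‖v‖ ^ 2)) u]
  rw [GaussianFourier.integral_rexp_neg_mul_sq_norm Real.pi_pos]
  simp [div_self Real.pi_ne_zero]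
end

section
/- With the notation of the context, let I, J ⊆ {1,…,n} be disjoint nonempty subsets and K, L ⊆ {1,…,n} disjoint nonempty subsets, and suppose that either K ∪ L ⊆ I, or K ∪ L ⊆ J, or (K ∪ L) ∩ (I ∪ J) = ∅. Then ⟨ ∑_{i∈I} ∑_{j∈J} v_{ij} , ∑_{k∈K} ∑_{l∈L} v_{kl} ⟩ = 0. Consequently, for any rooted binary tree with leaf set {1,…,n}, the vectors ṽ_v = ∑_{i ∈ I_{L(v)}} ∑_{j ∈ I_{R(v)}} v_{ij} attached to distinct internal vertices v — where I_{L(v)} and I_{R(v)} denote the sets of leaves descending from the left and right child of v — are mutually orthogonal: ⟨ṽ_v, ṽ_{v'}⟩ = 0 for v ≠ v'. -/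
/-- The vector `v_{ij} ∈ (ℝ^b)^n`, with `k`-th component `δ_{ki} p_j − δ_{kj} p_i`. -/
def vvec {b n : ℕ} (p : Fin n → Fin b → ℝ) (i j : Fin n) : Fin n → Fin b → ℝ :=
  fun k => (if k = i then p j else 0) - (if k = j then p i else 0)

/-- The bilinear form `⟨x,y⟩ = ∑ᵢ κ(pᵢ, xᵢ, yᵢ)` on `(ℝ^b)^n`. -/
def bform {b n : ℕ} (κ : (Fin b → ℝ) → (Fin b → ℝ) → (Fin b → ℝ) → ℝ)
    (p : Fin n → Fin b → ℝ) (x y : Fin n → Fin b → ℝ) : ℝ :=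
  ∑ i, κ (p i) (x i) (y i)

/-- Rooted binary trees with leaves labelled by elements of `Fin n`. -/
inductive BTree (n : ℕ) : Type where
  | leaf : Fin n → BTree n
  | node : BTree n → BTree n → BTree n

/-- The list of leaf labels of a binary tree, from left to right. -/
def leafList {n : ℕ} : BTree n → List (Fin n)
  | .leaf i => [i]
  | .node l r => leafList l ++ leafList r

/-- `occursIn s t` means that `s` occurs as a subtree of `t`. -/
def occursIn {n : ℕ} (s : BTree n) : BTree n → Prop
  | .leaf i => s = .leaf i
  | .node l r => s = .node l r ∨ occursIn s l ∨ occursIn s r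

/-- The vector `ṽ_v = ∑_{i ∈ I_{L(v)}} ∑_{j ∈ I_{R(v)}} v_{ij}` attached to an internal
vertex, i.e. to a subtree of the form `node l r` (and `0` on leaves). -/
def tvec {b n : ℕ} (p : Fin n → Fin b → ℝ) : BTree n → (Fin n → Fin b → ℝ)
  | .leaf _ => 0
  | .node l r => ∑ i ∈ (leafList l).toFinset, ∑ j ∈ (leafList r).toFinset, vvec p i j

section Alg
variable {b n : ℕ} {κ : (Fin b → ℝ) → (Fin b → ℝ) → (Fin b → ℝ) → ℝ}
    (hsymm12 : ∀ x y z, κ x y z = κ y x z)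
    (hsymm23 : ∀ x y z, κ x y z = κ x z y)
    (hadd : ∀ x y z z', κ x y (z + z') = κ x y z + κ x y z')
    (hsmul : ∀ (r : ℝ) (x y z), κ x y (r • z) = r * κ x y z)

include hsmul in
lemma k0 : ∀ x y, κ x y 0 = 0 := by
  intro x y
  have := hsmul 0 x y 0
  simpa using this

include hsymm23 hsmul in
lemma k02 : ∀ x z, κ x 0 z = 0 := by
  intro x z; rw [hsymm23]; exact k0 hsmul x z

include hsymm12 hsymm23 hsmul in
lemma k01 : ∀ y z, κ 0 y z = 0 := by
  intro y z; rw [hsymm12]; exact k02 hsymm23 hsmul y z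

include hsymm12 hsymm23 in
lemma k13 : ∀ x y z, κ x y z = κ z y x := by
  intro x y z; rw [hsymm12, hsymm23, hsymm12]

include hsmul in
lemma kneg3 : ∀ x y z, κ x y (-z) = -κ x y z := by
  intro x y z
  have := hsmul (-1) x y z
  simpa using this

include hsymm23 hsmul in
lemma kneg2 : ∀ x y z, κ x (-y) z = -κ x y z := by
  intro x y z; rw [hsymm23, kneg3 hsmul, hsymm23]

include hsymm12 hsymm23 hadd hsmul in
lemma ksum1 : ∀ (S : Finset (Fin n)) (f : Fin n → Fin b → ℝ) (y z : Fin b → ℝ),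
    κ (∑ s ∈ S, f s) y z = ∑ s ∈ S, κ (f s) y z := by
  intro S f y z
  induction S using Finset.induction with
  | empty => simp [k01 hsymm12 hsymm23 hsmul]
  | @insert a s h ih =>
    rw [Finset.sum_insert h, Finset.sum_insert h]
    calc κ (f a + ∑ s ∈ s, f s) y z = κ (f a) y z + κ (∑ s ∈ s, f s) y z := by
          rw [k13 hsymm12 hsymm23, hadd, ← k13 hsymm12 hsymm23 (f a),
            ← k13 hsymm12 hsymm23 (∑ s ∈ s, f s)]
      _ = κ (f a) y z + ∑ s ∈ s, κ (f s) y z := by rw [ih]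

end Alg

section Comp
variable {b n : ℕ} (p : Fin n → Fin b → ℝ)

lemma comp (I J : Finset (Fin n)) (m : Fin n) :
    (∑ i ∈ I, ∑ j ∈ J, vvec p i j) m =
      (if m ∈ I then ∑ j ∈ J, p j else 0) - (if m ∈ J then ∑ i ∈ I, p i else 0) := by
  simp only [Finset.sum_apply, vvec, Finset.sum_sub_distrib]
  congr 1
  · rw [Finset.sum_comm]
    simp [Finset.sum_ite_eq]
  · simp only [Finset.sum_ite_eq]
    split <;> simp

end Comp

section Main
variable {b n : ℕ} {κ : (Fin b → ℝ) → (Fin b → ℝ) → (Fin b → ℝ) → ℝ}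
    (hsymm12 : ∀ x y z, κ x y z = κ y x z)
    (hsymm23 : ∀ x y z, κ x y z = κ x z y)
    (hadd : ∀ x y z z', κ x y (z + z') = κ x y z + κ x y z')
    (hsmul : ∀ (r : ℝ) (x y z), κ x y (r • z) = r * κ x y z)
    (p : Fin n → Fin b → ℝ)

include hsymm12 hsymm23 hadd hsmul in
lemma mainlem (I J K L : Finset (Fin n)) (hIJ : Disjoint I J) (hKL : Disjoint K L)
    (hcase : K ∪ L ⊆ I ∨ K ∪ L ⊆ J ∨ Disjoint (K ∪ L) (I ∪ J)) :
    bform κ p (∑ i ∈ I, ∑ j ∈ J, vvec p i j) (∑ k ∈ K, ∑ l ∈ L, vvec p k l) = 0 := by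
  unfold bform
  rw [← Finset.sum_subset (Finset.subset_univ (K ∪ L)) (by
    intro m _ hm
    rw [Finset.mem_union] at hm
    push_neg at hm
    rw [comp p K L m, if_neg hm.1, if_neg hm.2, sub_zero]
    exact k0 hsmul _ _)]
  rw [Finset.sum_union hKL]
  rcases hcase with hsub | hsub | hdisj
  · -- K ∪ L ⊆ I
    have h1 : ∀ m ∈ K, κ (p m) ((∑ i ∈ I, ∑ j ∈ J, vvec p i j) m)
        ((∑ k ∈ K, ∑ l ∈ L, vvec p k l) m) = κ (p m) (∑ j ∈ J, p j) (∑ l ∈ L, p l) := by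
      intro m hm
      have hmI : m ∈ I := hsub (Finset.mem_union_left _ hm)
      rw [comp, comp, if_pos hmI, if_neg (Finset.disjoint_left.mp hIJ hmI),
        if_pos hm, if_neg (Finset.disjoint_left.mp hKL hm), sub_zero, sub_zero]
    have h2 : ∀ m ∈ L, κ (p m) ((∑ i ∈ I, ∑ j ∈ J, vvec p i j) m)
        ((∑ k ∈ K, ∑ l ∈ L, vvec p k l) m) = -κ (p m) (∑ j ∈ J, p j) (∑ k ∈ K, p k) := by
      intro m hm
      have hmI : m ∈ I := hsub (Finset.mem_union_right _ hm)
      rw [comp, comp, if_pos hmI, if_neg (Finset.disjoint_left.mp hIJ hmI),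
        if_pos hm, if_neg (Finset.disjoint_right.mp hKL hm), sub_zero, zero_sub,
        kneg3 hsmul]
    rw [Finset.sum_congr rfl h1, Finset.sum_congr rfl h2,
      ← ksum1 hsymm12 hsymm23 hadd hsmul, Finset.sum_neg_distrib,
      ← ksum1 hsymm12 hsymm23 hadd hsmul,
      k13 hsymm12 hsymm23 (∑ s ∈ K, p s)]
    exact add_neg_cancel _
  · -- K ∪ L ⊆ J
    have h1 : ∀ m ∈ K, κ (p m) ((∑ i ∈ I, ∑ j ∈ J, vvec p i j) m)
        ((∑ k ∈ K, ∑ l ∈ L, vvec p k l) m) = -κ (p m) (∑ i ∈ I, p i) (∑ l ∈ L, p l) := by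
      intro m hm
      have hmJ : m ∈ J := hsub (Finset.mem_union_left _ hm)
      rw [comp, comp, if_pos hmJ, if_neg (Finset.disjoint_right.mp hIJ hmJ),
        if_pos hm, if_neg (Finset.disjoint_left.mp hKL hm), sub_zero, zero_sub,
        kneg2 hsymm23 hsmul]
    have h2 : ∀ m ∈ L, κ (p m) ((∑ i ∈ I, ∑ j ∈ J, vvec p i j) m)
        ((∑ k ∈ K, ∑ l ∈ L, vvec p k l) m) = κ (p m) (∑ i ∈ I, p i) (∑ k ∈ K, p k) := by
      intro m hm
      have hmJ : m ∈ J := hsub (Finset.mem_union_right _ hm)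
      rw [comp, comp, if_pos hmJ, if_neg (Finset.disjoint_right.mp hIJ hmJ),
        if_pos hm, if_neg (Finset.disjoint_right.mp hKL hm), zero_sub, zero_sub,
        kneg2 hsymm23 hsmul, kneg3 hsmul, neg_neg]
    rw [Finset.sum_congr rfl h1, Finset.sum_congr rfl h2, Finset.sum_neg_distrib,
      ← ksum1 hsymm12 hsymm23 hadd hsmul, ← ksum1 hsymm12 hsymm23 hadd hsmul,
      k13 hsymm12 hsymm23 (∑ s ∈ K, p s)]
    exact neg_add_cancel _
  · -- disjoint
    have h0 : ∀ m ∈ K ∪ L, κ (p m) ((∑ i ∈ I, ∑ j ∈ J, vvec p i j) m)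
        ((∑ k ∈ K, ∑ l ∈ L, vvec p k l) m) = 0 := by
      intro m hm
      have hmI : m ∉ I := fun h =>
        Finset.disjoint_left.mp hdisj hm (Finset.mem_union_left _ h)
      have hmJ : m ∉ J := fun h =>
        Finset.disjoint_left.mp hdisj hm (Finset.mem_union_right _ h)
      rw [comp p I J m, if_neg hmI, if_neg hmJ, sub_zero]
      exact k02 hsymm23 hsmul _ _
    rw [Finset.sum_congr rfl (fun m hm => h0 m (Finset.mem_union_left _ hm)),
      Finset.sum_congr rfl (fun m hm => h0 m (Finset.mem_union_right _ hm))]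
    simp

end Main


lemma leafList_ne_nil {n : ℕ} (T : BTree n) : leafList T ≠ [] := by
  induction T with
  | leaf i => simp [leafList]
  | node l r ihl ihr => simp [leafList, ihl]

lemma occursIn_self {n : ℕ} (T : BTree n) : occursIn T T := by
  cases T with
  | leaf i => rfl
  | node l r => exact Or.inl rfl

lemma leafList_subset {n : ℕ} {S T : BTree n} (h : occursIn S T) :
    ∀ i ∈ leafList S, i ∈ leafList T := by
  induction T with
  | leaf j => rw [h]; exact fun i hi => hi
  | node l r ihl ihr =>
    rcases h with h | h | h
    · rw [h]; exact fun i hi => hi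
    · intro i hi; simp only [leafList, List.mem_append]; exact Or.inl (ihl h i hi)
    · intro i hi; simp only [leafList, List.mem_append]; exact Or.inr (ihr h i hi)

lemma nodup_occurs {n : ℕ} {S T : BTree n} (h : occursIn S T)
    (hT : (leafList T).Nodup) : (leafList S).Nodup := by
  induction T with
  | leaf j => rw [h]; exact hT
  | node l r ihl ihr =>
    rw [leafList, List.nodup_append] at hT
    rcases h with h | h | h
    · rw [h, leafList, List.nodup_append]; exact hT
    · exact ihl h hT.1
    · exact ihr h hT.2.1

lemma trichotomy {n : ℕ} (T : BTree n) (hT : (leafList T).Nodup) (S₁ S₂ : BTree n)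
    (h₁ : occursIn S₁ T) (h₂ : occursIn S₂ T) :
    occursIn S₁ S₂ ∨ occursIn S₂ S₁ ∨ ∀ i ∈ leafList S₁, i ∉ leafList S₂ := by
  induction T with
  | leaf j => left; rw [h₁, ← h₂]; exact occursIn_self _
  | node l r ihl ihr =>
    rw [leafList, List.nodup_append] at hT
    rcases h₁ with h₁ | h₁ | h₁
    · right; left; rw [h₁]; exact h₂
    · rcases h₂ with h₂ | h₂ | h₂
      · left; rw [h₂]; exact Or.inr (Or.inl h₁)
      · exact ihl hT.1 h₁ h₂
      · right; right
        intro i hi hi2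
        exact hT.2.2 i (leafList_subset h₁ i hi) i (leafList_subset h₂ i hi2) rfl
    · rcases h₂ with h₂ | h₂ | h₂
      · left; rw [h₂]; exact Or.inr (Or.inr h₁)
      · right; right
        intro i hi hi2
        exact hT.2.2 i (leafList_subset h₂ i hi2) i (leafList_subset h₁ i hi) rfl
      · exact ihr hT.2.1 h₁ h₂

section BformSymm
variable {b n : ℕ} {κ : (Fin b → ℝ) → (Fin b → ℝ) → (Fin b → ℝ) → ℝ}
    (hsymm23 : ∀ x y z, κ x y z = κ x z y) (p : Fin n → Fin b → ℝ)

include hsymm23 in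
lemma bform_symm (x y : Fin n → Fin b → ℝ) : bform κ p x y = bform κ p y x := by
  unfold bform
  exact Finset.sum_congr rfl fun i _ => hsymm23 _ _ _

end BformSymm

/-- for disjoint nonempty `I, J` and disjoint nonempty `K, L` with
`K ∪ L ⊆ I`, or `K ∪ L ⊆ J`, or `(K ∪ L) ∩ (I ∪ J) = ∅`, one has
`⟨∑_{i∈I}∑_{j∈J} v_{ij}, ∑_{k∈K}∑_{l∈L} v_{kl}⟩ = 0`.  Consequently, for a rooted
binary tree with leaf set `{1,…,n}`, the vectors `ṽ_v` attached to distinct internal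
vertices are mutually orthogonal. -/
theorem vvec_orthogonality (b n : ℕ)
    (κ : (Fin b → ℝ) → (Fin b → ℝ) → (Fin b → ℝ) → ℝ)
    (hsymm12 : ∀ x y z, κ x y z = κ y x z)
    (hsymm23 : ∀ x y z, κ x y z = κ x z y)
    (hadd : ∀ x y z z', κ x y (z + z') = κ x y z + κ x y z')
    (hsmul : ∀ (r : ℝ) (x y z), κ x y (r • z) = r * κ x y z)
    (p : Fin n → Fin b → ℝ) :
    (∀ I J K L : Finset (Fin n), I.Nonempty → J.Nonempty → Disjoint I J →
      K.Nonempty → L.Nonempty → Disjoint K L →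
      (K ∪ L ⊆ I ∨ K ∪ L ⊆ J ∨ Disjoint (K ∪ L) (I ∪ J)) →
      bform κ p (∑ i ∈ I, ∑ j ∈ J, vvec p i j) (∑ k ∈ K, ∑ l ∈ L, vvec p k l) = 0) ∧
    (∀ T : BTree n, (leafList T).Nodup → (∀ i : Fin n, i ∈ leafList T) →
      ∀ T₁ T₂ : BTree n, occursIn T₁ T → occursIn T₂ T →
        (∃ l r, T₁ = BTree.node l r) → (∃ l r, T₂ = BTree.node l r) → T₁ ≠ T₂ →
        bform κ p (tvec p T₁) (tvec p T₂) = 0) := by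
  have main := mainlem hsymm12 hsymm23 hadd hsmul p
  refine ⟨fun I J K L _ _ hIJ _ _ hKL hcase => main I J K L hIJ hKL hcase, ?_⟩
  intro T hnodup _ T₁ T₂ h₁ h₂ e₁ e₂ hne
  obtain ⟨l₁, r₁, rfl⟩ := e₁
  obtain ⟨l₂, r₂, rfl⟩ := e₂
  have subset_fin : ∀ {S T' : BTree n}, occursIn S T' →
      (leafList S).toFinset ⊆ (leafList T').toFinset := by
    intro S T' h x hx
    rw [List.mem_toFinset] at hx ⊢
    exact leafList_subset h x hx
  have union_eq : ∀ (l r : BTree n), (leafList (BTree.node l r)).toFinset =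
      (leafList l).toFinset ∪ (leafList r).toFinset := by
    intro l r; simp [leafList]
  have disj_node : ∀ {l r : BTree n}, occursIn (BTree.node l r) T →
      Disjoint (leafList l).toFinset (leafList r).toFinset := by
    intro l r h
    have nd := nodup_occurs h hnodup
    rw [show leafList (BTree.node l r) = leafList l ++ leafList r from rfl,
      List.nodup_append] at nd
    exact List.disjoint_toFinset_iff_disjoint.mpr (fun a ha hb => nd.2.2 a ha a hb rfl)
  simp only [tvec]
  rcases trichotomy T hnodup _ _ h₁ h₂ with ht | ht | ht
  · -- occursIn T₁ T₂
    rcases ht with heq | ht | ht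
    · exact absurd heq hne
    · rw [bform_symm hsymm23]
      refine main _ _ _ _ (disj_node h₂) (disj_node h₁) (Or.inl ?_)
      exact (union_eq l₁ r₁) ▸ subset_fin ht
    · rw [bform_symm hsymm23]
      refine main _ _ _ _ (disj_node h₂) (disj_node h₁) (Or.inr (Or.inl ?_))
      exact (union_eq l₁ r₁) ▸ subset_fin ht
  · -- occursIn T₂ T₁
    rcases ht with heq | ht | ht
    · exact absurd heq.symm hne
    · refine main _ _ _ _ (disj_node h₁) (disj_node h₂) (Or.inl ?_)
      exact (union_eq l₂ r₂) ▸ subset_fin ht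
    · refine main _ _ _ _ (disj_node h₁) (disj_node h₂) (Or.inr (Or.inl ?_))
      exact (union_eq l₂ r₂) ▸ subset_fin ht
  · -- leaf-disjoint
    refine main _ _ _ _ (disj_node h₁) (disj_node h₂) (Or.inr (Or.inr ?_))
    rw [Finset.disjoint_right]
    intro x hx hx2
    rw [← union_eq] at hx hx2
    rw [List.mem_toFinset] at hx hx2
    exact ht x hx hx2
end
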